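/- Let p be a prime, let S be a discrete p-toral group, and let P be a nontrivial normal subgroup of S. Then P ∩ Ω₁(Z(S)) ≠ 1; explicitly, there exists an element x ∈ P with x ≠ 1, x^p = 1, and x lying in the center of S. -/

import Mathlib

/-- The image of the `p`-adic integers in `ℚ_[p]`, as an additive subgroup. -/
noncomputable def padicIntAddSubgroup (p : ℕ) [Fact p.Prime] : AddSubgroup ℚ_[p] :=
  (PadicInt.Coe.ringHom (p := p)).toAddMonoidHom.range

/-- The Prüfer `p`-group `ℤ(p^∞)`, realized as `ℚ_[p] ⧸ ℤ_[p]`. -/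
abbrev ZpInfty (p : ℕ) [Fact p.Prime] : Type :=
  ℚ_[p] ⧸ padicIntAddSubgroup p

/-- The discrete `p`-torus of rank `r`. -/
abbrev DiscretePTorus (p : ℕ) [Fact p.Prime] (r : ℕ) : Type :=
  Fin r → ZpInfty p

/-- A group `S` is discrete `p`-toral if it has a normal subgroup of finite `p`-power
index that is isomorphic to a discrete `p`-torus. -/
def IsDiscretePToral (p : ℕ) [Fact p.Prime] (S : Type*) [Group S] : Prop :=
  ∃ T : Subgroup S, T.Normal ∧ (∃ n : ℕ, T.index = p ^ n) ∧
    ∃ r : ℕ, Nonempty (T ≃* Multiplicative (DiscretePTorus p r))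
set_option linter.unusedSectionVars false

section Aux
variable (p : ℕ) [Fact p.Prime]

lemma aux_mem_padicIntAddSubgroup_iff {x : ℚ_[p]} :
    x ∈ padicIntAddSubgroup p ↔ ‖x‖ ≤ 1 := by
  constructor
  · rintro ⟨y, rfl⟩
    exact y.2
  · intro h
    exact ⟨⟨x, h⟩, rfl⟩

lemma aux_zpinfty_torsion (a : ZpInfty p) : ∃ k : ℕ, p ^ k • a = 0 := by
  obtain ⟨q, rfl⟩ := QuotientAddGroup.mk_surjective a
  obtain ⟨k, hk⟩ := pow_unbounded_of_one_lt (R := ℝ) ‖q‖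
    (by exact_mod_cast Nat.one_lt_cast.mpr (Fact.out : p.Prime).one_lt)
  refine ⟨k, ?_⟩
  have : ((p ^ k : ℕ) : ℚ_[p]) * q ∈ padicIntAddSubgroup p := by
    rw [aux_mem_padicIntAddSubgroup_iff, norm_mul]
    push_cast
    rw [norm_pow, Padic.norm_p]
    have hp1 : (1:ℝ) < (p:ℝ) := by exact_mod_cast (Fact.out : p.Prime).one_lt
    have hp0 : (0:ℝ) < (p:ℝ) := by positivity
    rw [inv_pow]
    rw [inv_mul_le_iff₀ (by positivity), mul_one]
    exact hk.le
  have h2 : p ^ k • (QuotientAddGroup.mk q : ZpInfty p)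
      = QuotientAddGroup.mk (p ^ k • q) := rfl
  rw [h2]
  rw [QuotientAddGroup.eq_zero_iff]
  simpa [nsmul_eq_mul] using this

lemma aux_zpinfty_tors_finite : (setOf fun a : ZpInfty p => p • a = 0).Finite := by
  have hp0 : (p : ℚ_[p]) ≠ 0 := by
    exact_mod_cast (Fact.out : p.Prime).ne_zero
  apply Set.Finite.subset (Set.finite_range
    (fun j : Fin p => (QuotientAddGroup.mk ((j : ℚ_[p]) / p) : ZpInfty p)))
  rintro a ha
  obtain ⟨q, rfl⟩ := QuotientAddGroup.mk_surjective a
  have h1 : (p : ℚ_[p]) * q ∈ padicIntAddSubgroup p := by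
    have : p • (QuotientAddGroup.mk q : ZpInfty p)
        = QuotientAddGroup.mk (p • q) := rfl
    change p • (QuotientAddGroup.mk q : ZpInfty p) = 0 at ha
    rw [this, QuotientAddGroup.eq_zero_iff] at ha
    simpa [nsmul_eq_mul] using ha
  obtain ⟨c, hc⟩ := h1
  -- hc : ↑c = p * q
  have hrepr := PadicInt.sub_zmodRepr_mem c
  rw [PadicInt.maximalIdeal_eq_span_p, Ideal.mem_span_singleton] at hrepr
  obtain ⟨d, hd⟩ := hrepr
  refine ⟨⟨c.zmodRepr, PadicInt.zmodRepr_lt_p c⟩, ?_⟩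
  rw [QuotientAddGroup.eq]
  refine ⟨d, ?_⟩
  have hc' : (c : ℚ_[p]) = p * q := hc
  have hd' : (c : ℚ_[p]) - (c.zmodRepr : ℚ_[p]) = p * d := by
    exact_mod_cast congrArg (PadicInt.Coe.ringHom (p := p)) hd
  have : (d : ℚ_[p]) = q - (c.zmodRepr : ℚ_[p]) / p := by
    have key : (p:ℚ_[p]) * (d:ℚ_[p]) = (p:ℚ_[p]) * (q - (c.zmodRepr:ℚ_[p])/p) := by
      rw [mul_sub, mul_div_cancel₀ _ hp0]
      linear_combination hc' - hd'
    exact mul_left_cancel₀ hp0 key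
  show (d : ℚ_[p]) = _
  rw [this]
  ring

lemma aux_pow_down {S : Type*} [Group S] {x : S} (hx : x ≠ 1) :
    ∀ k : ℕ, x ^ p ^ k = 1 → ∃ j : ℕ, x ^ p ^ j ≠ 1 ∧ (x ^ p ^ j) ^ p = 1 := by
  intro k
  induction k with
  | zero => intro h; simp at h; exact absurd h hx
  | succ k ih =>
    intro h
    by_cases h' : x ^ p ^ k = 1
    · exact ih h'
    · exact ⟨k, h', by rw [← pow_mul, ← pow_succ]; exact h⟩

lemma aux_key_fixed {S : Type*} [Group S] (hpS : IsPGroup p S)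
    (K : Subgroup S) [K.Normal] [Finite K] (hK : K ≠ ⊥) :
    ∃ x : S, x ∈ K ∧ x ≠ 1 ∧ x ∈ Subgroup.center S := by
  have hpC : IsPGroup p (ConjAct S) := hpS.of_equiv ConjAct.toConjAct
  have hKnt : Nontrivial K := by
    rw [Subgroup.ne_bot_iff_exists_ne_one] at hK
    obtain ⟨a, ha⟩ := hK
    exact ⟨a, 1, ha⟩
  obtain ⟨m, hm0, hm⟩ := ((hpS.to_subgroup K).nontrivial_iff_card).mp hKnt
  have hdvd : p ∣ Nat.card K := hm ▸ dvd_pow_self p hm0.ne'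
  have h1 : (1 : K) ∈ MulAction.fixedPoints (ConjAct S) K := by
    intro g
    apply Subtype.ext
    rw [ConjAct.Subgroup.val_conj_smul]
    simp
  obtain ⟨b, hb, hb1⟩ := hpC.exists_fixed_point_of_prime_dvd_card_of_fixed_point (α := K) hdvd h1
  refine ⟨(b : S), b.2, fun h => hb1 (Subtype.ext h.symm), ?_⟩
  rw [Subgroup.mem_center_iff]
  intro g
  have := hb (ConjAct.toConjAct g)
  apply_fun (Subtype.val) at this
  rw [ConjAct.Subgroup.val_conj_smul] at this
  simp only [ConjAct.toConjAct_smul] at this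
  calc g * b = (g * b * g⁻¹) * g := by group
  _ = b * g := by rw [this]

lemma aux_tors_mono {a : ZpInfty p} {k k' : ℕ} (h : p ^ k • a = 0) (hk : k ≤ k') :
    p ^ k' • a = 0 := by
  rw [← Nat.sub_add_cancel hk, pow_add, mul_smul, h, smul_zero]

lemma aux_torus_pgroup (r : ℕ) : IsPGroup p (Multiplicative (DiscretePTorus p r)) := by
  intro y
  have h : ∀ i : Fin r, ∃ k, p ^ k • (Multiplicative.toAdd y i) = 0 :=
    fun i => aux_zpinfty_torsion p _
  choose f hf using h
  refine ⟨Finset.univ.sup f, ?_⟩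
  apply Multiplicative.toAdd.injective
  rw [toAdd_pow]
  funext i
  show (p ^ Finset.univ.sup f • Multiplicative.toAdd y) i = (0 : ZpInfty p)
  rw [Pi.smul_apply]
  exact aux_tors_mono p (hf i) (Finset.le_sup (Finset.mem_univ i))

theorem aux_main
    {S : Type*} [Group S] 
    (T : Subgroup S) (hTn : T.Normal) (n : ℕ) (hidx : T.index = p ^ n)
    (r : ℕ) (e : T ≃* Multiplicative (DiscretePTorus p r))
    (P : Subgroup S) (hPn : P.Normal) (hP : P ≠ ⊥) :
    ∃ x : S, x ∈ P ∧ x ≠ 1 ∧ x ^ p = 1 ∧ x ∈ Subgroup.center S := by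
  haveI : T.FiniteIndex := ⟨by rw [hidx]; exact pow_ne_zero _ (Fact.out : p.Prime).ne_zero⟩
  haveI := hTn
  haveI := hPn
  -- T is a p-group
  have hpT : IsPGroup p T := (aux_torus_pgroup p r).of_equiv e.symm
  -- S is a p-group
  have hpS : IsPGroup p S := by
    intro g
    have hg : g ^ (p ^ n) ∈ T := by rw [← hidx]; exact Subgroup.pow_index_mem T g
    obtain ⟨k, hk⟩ := hpT ⟨g ^ (p ^ n), hg⟩
    refine ⟨n + k, ?_⟩
    have h2 : (g ^ p ^ n) ^ p ^ k = 1 := by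
      have := congrArg (Subtype.val) hk
      simpa using this
    rw [pow_add, pow_mul]
    exact h2
  -- T is commutative
  have hTcomm : ∀ x y : T, x * y = y * x := fun x y => e.injective (by
    rw [map_mul, map_mul, mul_comm])
  by_cases hPT : P ⊓ T = ⊥
  · -- P is finite
    have hinj : Function.Injective (fun x : P => (QuotientGroup.mk (x : S) : S ⧸ T)) := by
      intro a b hab
      have : (a : S)⁻¹ * b ∈ T := (QuotientGroup.eq (s := T)).mp hab
      have h2 : (a : S)⁻¹ * b ∈ P ⊓ T := ⟨P.mul_mem (P.inv_mem a.2) b.2, this⟩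
      rw [hPT, Subgroup.mem_bot] at h2
      exact Subtype.ext (by rw [← mul_left_cancel_iff (a := (a:S)⁻¹), h2, inv_mul_cancel])
    haveI : Finite (S ⧸ T) := Nat.finite_of_card_ne_zero (by
      show T.index ≠ 0
      rw [hidx]; exact pow_ne_zero _ (Fact.out : p.Prime).ne_zero)
    haveI : Finite P := Finite.of_injective _ hinj
    obtain ⟨x, hxP, hx1, hxc⟩ := aux_key_fixed p hpS P hP
    obtain ⟨k, hk⟩ := hpS x
    obtain ⟨j, hj1, hjp⟩ := aux_pow_down p hx1 k hk
    exact ⟨x ^ p ^ j, pow_mem hxP _, hj1, hjp,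
      (Subgroup.center S).pow_mem hxc _⟩
  · -- build the subgroup K = {x ∈ P ∩ T | x ^ p = 1}
    set K : Subgroup S :=
      { carrier := {x | x ∈ P ∧ x ∈ T ∧ x ^ p = 1}
        one_mem' := ⟨one_mem P, one_mem T, one_pow p⟩
        mul_mem' := by
          rintro a b ⟨ha1, ha2, ha3⟩ ⟨hb1, hb2, hb3⟩
          refine ⟨mul_mem ha1 hb1, mul_mem ha2 hb2, ?_⟩
          have hc : Commute a b := by
            have := hTcomm ⟨a, ha2⟩ ⟨b, hb2⟩
            exact congrArg Subtype.val this
          rw [hc.mul_pow, ha3, hb3, one_mul]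
        inv_mem' := by
          rintro a ⟨ha1, ha2, ha3⟩
          exact ⟨inv_mem ha1, inv_mem ha2, by rw [inv_pow, ha3, inv_one]⟩ } with hKdef
    haveI hKn : K.Normal := by
      constructor
      rintro x ⟨h1, h2, h3⟩ g
      refine ⟨hPn.conj_mem x h1 g, hTn.conj_mem x h2 g, ?_⟩
      rw [conj_pow, h3, mul_one, mul_inv_cancel]
    -- K is finite
    haveI : Finite {b : ZpInfty p // p • b = 0} := (aux_zpinfty_tors_finite p).to_subtype
    haveI hKfin : Finite K := by
      have hinj : Function.Injective (fun x : K =>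
          (fun i => (⟨Multiplicative.toAdd (e ⟨(x : S), x.2.2.1⟩) i, by
            have h3 : (⟨(x : S), x.2.2.1⟩ : T) ^ p = 1 := Subtype.ext (by
              rw [Subgroup.coe_pow]; exact x.2.2.2)
            have := congrArg Multiplicative.toAdd (congrArg e (h3))
            rw [map_pow, toAdd_pow, map_one] at this
            exact congrFun this i⟩ : {b : ZpInfty p // p • b = 0})
            : Fin r → {b : ZpInfty p // p • b = 0})) := by
        intro a b hab
        have : e ⟨(a : S), a.2.2.1⟩ = e ⟨(b : S), b.2.2.1⟩ := by
          apply Multiplicative.toAdd.injective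
          funext i
          exact congrArg Subtype.val (congrFun hab i)
        have h4 := Subtype.ext_iff.mp (e.injective this)
        exact Subtype.ext h4
      exact Finite.of_injective _ hinj
    -- K ≠ ⊥
    have hKbot : K ≠ ⊥ := by
      rw [Subgroup.ne_bot_iff_exists_ne_one]
      obtain ⟨zz, hz⟩ := Subgroup.ne_bot_iff_exists_ne_one.mp hPT
      have hz1 : (zz : S) ∈ P := (Subgroup.mem_inf.mp zz.2).1
      have hz2 : (zz : S) ∈ T := (Subgroup.mem_inf.mp zz.2).2
      have hzne : (zz : S) ≠ 1 := fun h => hz (Subtype.ext h)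
      obtain ⟨k, hk⟩ := hpS (zz : S)
      obtain ⟨j, hj1, hjp⟩ := aux_pow_down p hzne k hk
      exact ⟨⟨(zz : S) ^ p ^ j, P.pow_mem hz1 _, T.pow_mem hz2 _, hjp⟩, by
        intro h; exact hj1 (congrArg Subtype.val h)⟩
    obtain ⟨x, hxK, hx1, hxc⟩ := aux_key_fixed p hpS K hKbot
    exact ⟨x, hxK.1, hx1, hxK.2.2, hxc⟩

end Aux

/-- If `S` is a discrete `p`-toral group and `P` is a nontrivial
normal subgroup of `S`, then `P ∩ Ω₁(Z(S)) ≠ 1`: there is `x ∈ P` with `x ≠ 1`,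
`x ^ p = 1`, and `x` central in `S`. -/
theorem nontrivial_normal_meets_omega1_center
    (p : ℕ) [Fact p.Prime] {S : Type*} [Group S] (hS : IsDiscretePToral p S)
    (P : Subgroup S) (hPn : P.Normal) (hP : P ≠ ⊥) :
    ∃ x : S, x ∈ P ∧ x ≠ 1 ∧ x ^ p = 1 ∧ x ∈ Subgroup.center S := by
  obtain ⟨T, hTn, ⟨n, hidx⟩, r, ⟨e⟩⟩ := hS
  exact aux_main p T hTn n hidx r e P hPn hP
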